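/- Let N ≥ 2. Define F_A(v) = (1/2)∑_{i=1}^N v_i² − ∑_{1≤i<j≤N} log|v_j − v_i| for v ∈ ℝ^N with pairwise distinct coordinates, and K_A = (N/4)(N−1)(1 + log 2) − (1/2)∑_{i=1}^N i·log i. Let h_N = (h_{N,1}, …, h_{N,N}) be the vector of zeros of the N-th physicists' Hermite polynomial H_N in increasing order. Then F_A(v) ≥ K_A for every v ∈ ℝ^N with pairwise distinct coordinates, and equality holds if and only if (v_1, …, v_N) is a permutation of (h_{N,1}, …, h_{N,N}); in particular F_A(h_N) = K_A. -/

import Mathlib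

open Finset Polynomial

/-- The physicists' Hermite polynomial `H_N(x) = (−1)^N e^{x²} (d/dx)^N e^{−x²}`. -/
noncomputable def physHermite (N : ℕ) (x : ℝ) : ℝ :=
  (-1 : ℝ) ^ N * Real.exp (x ^ 2) * iteratedDeriv N (fun y => Real.exp (-(y ^ 2))) x

noncomputable def physH : ℕ → Polynomial ℝ
  | 0 => 1
  | n + 1 => 2 * X * physH n - derivative (physH n)

@[simp] lemma physH_zero : physH 0 = 1 := rfl
lemma physH_succ (n : ℕ) : physH (n + 1) = 2 * X * physH n - derivative (physH n) := rfl

lemma two_X_eq : (2 * X : Polynomial ℝ) = C 2 * X := by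
  rw [map_ofNat]

lemma physH_aux (n : ℕ) : (physH n).natDegree ≤ n ∧ (physH n).coeff n = 2 ^ n := by
  induction n with
  | zero => simp
  | succ n ih =>
    obtain ⟨hd, hc⟩ := ih
    constructor
    · refine le_trans (natDegree_sub_le _ _) (max_le ?_ ?_)
      · rw [two_X_eq, mul_assoc]
        refine le_trans (natDegree_C_mul_le _ _) ?_
        refine le_trans (natDegree_mul_le) ?_
        simp only [natDegree_X]
        omega
      · exact le_trans (natDegree_derivative_le _) (by omega)
    · have h1 : (2 * X * physH n).coeff (n + 1) = 2 * (physH n).coeff n := by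
        rw [two_X_eq, mul_assoc, coeff_C_mul, coeff_X_mul]
      have h2 : (derivative (physH n)).coeff (n + 1) = 0 := by
        rw [coeff_derivative, coeff_eq_zero_of_natDegree_lt (by omega)]
        ring
      rw [physH_succ, coeff_sub, h1, h2, hc]
      ring

lemma physH_coeff (n : ℕ) : (physH n).coeff n = 2 ^ n := (physH_aux n).2

lemma physH_ne_zero (n : ℕ) : physH n ≠ 0 := fun h => by
  have h2 := physH_coeff n
  rw [h] at h2
  simp only [coeff_zero] at h2
  exact absurd h2.symm (by positivity)

lemma physH_natDegree (n : ℕ) : (physH n).natDegree = n :=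
  le_antisymm (physH_aux n).1 (le_natDegree_of_ne_zero (by rw [physH_coeff]; positivity))

lemma physH_leadingCoeff (n : ℕ) : (physH n).leadingCoeff = 2 ^ n := by
  rw [leadingCoeff, physH_natDegree, physH_coeff]

lemma physH_deriv (n : ℕ) :
    derivative (physH (n + 1)) = C (2 * ((n : ℝ) + 1)) * physH n := by
  induction n with
  | zero =>
    show derivative (2 * X * 1 - derivative 1) = _
    simp only [mul_one, derivative_one, sub_zero, physH_zero, mul_one]
    rw [two_X_eq, derivative_C_mul, derivative_X, mul_one]
    norm_num
  | succ n ih =>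
    have hC : C (2 * ((n : ℝ) + 1 + 1)) = C (2 * ((n : ℝ) + 1)) + C 2 := by
      rw [← C_add]; ring_nf
    rw [physH_succ (n+1), derivative_sub, derivative_mul, ih, derivative_C_mul,
      two_X_eq, derivative_C_mul, derivative_X]
    push_cast
    rw [hC, physH_succ, two_X_eq]
    ring
  
lemma physH_ode (m : ℕ) :
    2 * X * derivative (physH m) - derivative (derivative (physH m))
      = C (2 * (m : ℝ)) * physH m := by
  cases m with
  | zero => simp
  | succ n =>
    rw [physH_deriv, derivative_C_mul, physH_succ]
    push_cast
    ring

lemma physHermite_eq (n : ℕ) (x : ℝ) :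
    iteratedDeriv n (fun y => Real.exp (-(y ^ 2))) x
      = (-1 : ℝ) ^ n * (eval x (physH n) * Real.exp (-(x ^ 2))) := by
  induction n generalizing x with
  | zero => simp
  | succ n ih =>
    rw [iteratedDeriv_succ]
    have hfun : iteratedDeriv n (fun y => Real.exp (-(y ^ 2)))
        = fun x => (-1 : ℝ) ^ n * (eval x (physH n) * Real.exp (-(x ^ 2))) := funext ih
    rw [hfun]
    have hp : HasDerivAt (fun x : ℝ => eval x (physH n)) (eval x (derivative (physH n))) x :=
      (physH n).hasDerivAt x
    have he : HasDerivAt (fun x : ℝ => Real.exp (-(x ^ 2)))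
        (Real.exp (-(x ^ 2)) * (-(2 * x))) x := by
      have h0 : HasDerivAt (fun x : ℝ => -(x ^ 2)) (-(2 * x)) x := by
        simpa using (hasDerivAt_pow 2 x).fun_neg
      exact h0.exp
    have h1 := (hp.fun_mul he).const_mul ((-1 : ℝ) ^ n)
    rw [h1.deriv, physH_succ, eval_sub, eval_mul, eval_mul, eval_ofNat, eval_X, pow_succ]
    ring

lemma physHermite_eval (n : ℕ) (x : ℝ) : physHermite n x = eval x (physH n) := by
  rw [physHermite, physHermite_eq]
  rw [show (-1:ℝ)^n * Real.exp (x^2) * ((-1:ℝ)^n * (eval x (physH n) * Real.exp (-(x^2))))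
    = (((-1:ℝ)^n)^2 : ℝ) * eval x (physH n) * (Real.exp (-(x^2)) * Real.exp (x^2)) from by ring]
  rw [← Real.exp_add, neg_add_cancel, Real.exp_zero, ← pow_mul, mul_comm n 2, pow_mul]
  norm_num


lemma physH_zero' : physH 0 = 1 := rfl

section factor
variable {n : ℕ} {s : Finset ℝ}

lemma physH_factor (hcard : s.card = n) (hroot : ∀ x ∈ s, eval x (physH n) = 0) :
    physH n = C ((2:ℝ) ^ n) * ∏ x ∈ s, (X - C x) := by
  rcases Nat.eq_zero_or_pos n with hn | hn
  · subst hn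
    rw [Finset.card_eq_zero.mp hcard]
    simp [physH_zero']
  set q : Polynomial ℝ := physH n - C ((2:ℝ)^n) * ∏ x ∈ s, (X - C x) with hq
  have hmonic : (∏ x ∈ s, (X - C x)).Monic := monic_prod_of_monic _ _ (fun x _ => monic_X_sub_C x)
  have hdeg : (∏ x ∈ s, (X - C x)).natDegree = n := by
    rw [natDegree_prod _ _ (fun i _ => X_sub_C_ne_zero i)]
    simp [hcard]
  have hcoeffq : q.coeff n = 0 := by
    rw [hq, coeff_sub, physH_coeff, coeff_C_mul, ← hdeg, hmonic.coeff_natDegree]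
    ring
  have hdq : q.natDegree ≤ n := by
    refine le_trans (natDegree_sub_le _ _) (max_le (le_of_eq (physH_natDegree n)) ?_)
    refine le_trans (natDegree_C_mul_le _ _) (le_of_eq hdeg)
  have hq0 : q = 0 := by
    by_contra hne
    have hlt : q.natDegree < n := by
      rcases lt_or_eq_of_le hdq with h | h
      · exact h
      · exfalso
        apply leadingCoeff_ne_zero.mpr hne
        rw [leadingCoeff, h]
        exact hcoeffq
    refine hne (eq_zero_of_natDegree_lt_card_of_eval_eq_zero' q s ?_ (by rw [hcard]; exact hlt))
    intro x hx
    have h1 : eval x (∏ y ∈ s, (X - C y)) = 0 := by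
      rw [eval_prod]
      exact Finset.prod_eq_zero hx (by simp)
    simp [hq, hroot x hx, h1]
  exact sub_eq_zero.mp hq0

lemma physH_root_mem (hcard : s.card = n) (hroot : ∀ x ∈ s, eval x (physH n) = 0) :
    ∀ y : ℝ, eval y (physH n) = 0 → y ∈ s := by
  intro y hy
  rw [physH_factor hcard hroot] at hy
  simp only [eval_mul, eval_C, eval_prod, eval_sub, eval_X] at hy
  have h2 : (2:ℝ)^n ≠ 0 := by positivity
  rcases mul_eq_zero.mp hy with h | h
  · exact absurd h h2
  · obtain ⟨a, ha, ha2⟩ := Finset.prod_eq_zero_iff.mp h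
    have : y = a := by linarith
    exact this ▸ ha

lemma physH_deriv_eval (hcard : s.card = n) (hroot : ∀ x ∈ s, eval x (physH n) = 0)
    {x : ℝ} (hx : x ∈ s) :
    eval x (derivative (physH n)) = 2 ^ n * ∏ y ∈ s.erase x, (x - y) := by
  conv_lhs => rw [physH_factor hcard hroot]
  rw [derivative_C_mul, eval_mul, eval_C]
  congr 1
  have h1 : (∏ y ∈ s, (X - C y)) = (Multiset.map (fun a => X - C a) s.val).prod := rfl
  rw [h1, eval_multiset_prod_X_sub_C_derivative (by simpa using hx)]
  rw [← Finset.erase_val]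
  rfl

end factor

lemma physH_degree_pos {m : ℕ} (hm : 1 ≤ m) : 0 < (physH m).degree := by
  rw [degree_eq_natDegree (physH_ne_zero m), physH_natDegree]
  exact_mod_cast hm

lemma physH_leadingCoeff' (n : ℕ) : (physH n).leadingCoeff = 2 ^ n := by
  rw [leadingCoeff, physH_natDegree, physH_coeff]

lemma physH_exists_pos_above {m : ℕ} (hm : 1 ≤ m) (c : ℝ) :
    ∃ b, c < b ∧ 0 < eval b (physH m) := by
  have ht := tendsto_atTop_of_leadingCoeff_nonneg (physH m) (physH_degree_pos hm)
    (by rw [physH_leadingCoeff']; positivity)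
  have h1 : ∀ᶠ x in Filter.atTop, 0 < eval x (physH m) := ht.eventually_gt_atTop 0
  have h2 : ∀ᶠ x : ℝ in Filter.atTop, c < x := Filter.eventually_gt_atTop c
  obtain ⟨b, hb1, hb2⟩ := (h2.and h1).exists
  exact ⟨b, hb1, hb2⟩

lemma physH_exists_sign_below {m : ℕ} (hm : 1 ≤ m) (c : ℝ) :
    ∃ a, a < c ∧ 0 < (-1) ^ m * eval a (physH m) := by
  set q : Polynomial ℝ := C ((-1:ℝ) ^ m) * (physH m).comp (-X) with hqdef
  have hcompne : (physH m).comp (-X) ≠ 0 := fun hc => by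
    have := natDegree_comp (p := physH m) (q := (-X : Polynomial ℝ))
    rw [hc] at this
    simp [physH_natDegree] at this
    omega
  have hqne : q ≠ 0 := by
    simp only [hqdef, mul_ne_zero_iff]
    constructor
    · simp only [ne_eq, C_eq_zero]
      positivity
    · exact hcompne
  have hqdeg : q.natDegree = m := by
    rw [hqdef, natDegree_C_mul (by positivity), natDegree_comp]
    simp [physH_natDegree]
  have hqlc : q.leadingCoeff = 2 ^ m := by
    rw [hqdef, leadingCoeff_mul, leadingCoeff_C,
      leadingCoeff_comp (by simp), physH_leadingCoeff', physH_natDegree]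
    have : (-X : Polynomial ℝ).leadingCoeff = -1 := by
      simpa using leadingCoeff_neg (X : Polynomial ℝ)
    rw [this, mul_comm ((2:ℝ)^m), ← mul_assoc, ← mul_pow]
    norm_num
  have ht := tendsto_atTop_of_leadingCoeff_nonneg q
    (by rw [degree_eq_natDegree hqne, hqdeg]; exact_mod_cast hm) (by rw [hqlc]; positivity)
  have h1 : ∀ᶠ x in Filter.atTop, 0 < eval x q := ht.eventually_gt_atTop 0
  have h2 : ∀ᶠ x : ℝ in Filter.atTop, -c < x := Filter.eventually_gt_atTop (-c)
  obtain ⟨x, hx1, hx2⟩ := (h2.and h1).exists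
  refine ⟨-x, by linarith, ?_⟩
  have : eval x q = (-1) ^ m * eval (-x) (physH m) := by
    simp [hqdef, eval_comp]
  rwa [this] at hx2

lemma univ_erase_eq {k : ℕ} (i : Fin k) : (univ.erase i) = Iio i ∪ Ioi i := by
  ext j
  simp only [mem_erase, mem_univ, and_true, mem_union, mem_Iio, mem_Ioi]
  constructor
  · intro hj
    exact lt_or_gt_of_ne hj
  · rintro (hj | hj) <;> [exact ne_of_lt hj; exact ne_of_gt hj]

lemma physH_roots_exist : ∀ k : ℕ, ∃ s : Finset ℝ, s.card = k ∧
    ∀ x ∈ s, eval x (physH k) = 0 := by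
  intro k
  induction k with
  | zero => exact ⟨∅, by simp⟩
  | succ k ih =>
    obtain ⟨s, hcard, hroot⟩ := ih
    set p := physH (k + 1) with hp
    -- the enumeration of s
    set ρ : Fin k → ℝ := fun i => ((s.orderIsoOfFin hcard) i : ℝ) with hρ
    have hρmono : StrictMono ρ := fun i j hij => by
      exact_mod_cast (s.orderIsoOfFin hcard).strictMono hij
    have hρmem : ∀ i, ρ i ∈ s := fun i => ((s.orderIsoOfFin hcard) i).2
    have hρim : Finset.image ρ univ = s := by
      apply Finset.eq_of_subset_of_card_le
      · intro x hx
        simp only [Finset.mem_image] at hx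
        obtain ⟨i, _, hi⟩ := hx
        exact hi ▸ hρmem i
      · rw [Finset.card_image_of_injective _ hρmono.injective, card_univ, Fintype.card_fin, hcard]
    -- sign of p at the roots of physH k
    have hsign : ∀ i : Fin k, 0 < (-1 : ℝ) ^ (k - (i:ℕ)) * eval (ρ i) p := by
      intro i
      have hev : eval (ρ i) p = -(2 ^ k * ∏ y ∈ s.erase (ρ i), (ρ i - y)) := by
        rw [hp, physH_succ, eval_sub, eval_mul, hroot _ (hρmem i), mul_zero, zero_sub,
          physH_deriv_eval hcard hroot (hρmem i)]
      have herase : s.erase (ρ i) = Finset.image ρ (univ.erase i) := by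
        rw [Finset.image_erase hρmono.injective, hρim]
      have hprod : ∏ y ∈ s.erase (ρ i), (ρ i - y) = ∏ j ∈ univ.erase i, (ρ i - ρ j) := by
        rw [herase, Finset.prod_image (fun a _ b _ hab => hρmono.injective hab)]
      have hsplit : ∏ j ∈ univ.erase i, (ρ i - ρ j)
          = (∏ j ∈ Iio i, (ρ i - ρ j)) * ∏ j ∈ Ioi i, (ρ i - ρ j) := by
        rw [univ_erase_eq i, Finset.prod_union]
        exact Finset.disjoint_left.mpr (fun j hj hj' => absurd (mem_Ioi.mp hj')
          (not_lt.mpr (le_of_lt (mem_Iio.mp hj))))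
      have hIio : 0 < ∏ j ∈ Iio i, (ρ i - ρ j) :=
        Finset.prod_pos (fun j hj => sub_pos.mpr (hρmono (mem_Iio.mp hj)))
      have hIoi : ∏ j ∈ Ioi i, (ρ i - ρ j)
          = (-1 : ℝ) ^ (k - 1 - (i:ℕ)) * ∏ j ∈ Ioi i, (ρ j - ρ i) := by
        rw [← Fin.card_Ioi i]
        rw [← Finset.prod_const (-1 : ℝ), ← Finset.prod_mul_distrib]
        exact Finset.prod_congr rfl (fun j _ => by ring)
      have hIoipos : 0 < ∏ j ∈ Ioi i, (ρ j - ρ i) :=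
        Finset.prod_pos (fun j hj => sub_pos.mpr (hρmono (mem_Ioi.mp hj)))
      have hik : (i : ℕ) < k := i.2
      have hexp : k - (i:ℕ) = (k - 1 - (i:ℕ)) + 1 := by omega
      rw [hev, hprod, hsplit, hIoi, hexp, pow_succ]
      have h2k : (0:ℝ) < 2 ^ k := by positivity
      have hsq : (0:ℝ) < ((-1 : ℝ) ^ (k - 1 - (i:ℕ)))^2 := by
        rcases Nat.even_or_odd (k - 1 - (i:ℕ)) with he | ho
        · rw [he.neg_one_pow]; norm_num
        · rw [ho.neg_one_pow]; norm_num
      nlinarith [mul_pos hIio hIoipos, mul_pos (mul_pos hIio hIoipos) h2k]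
    -- bounds
    obtain ⟨c₀, hc₀⟩ := s.bddAbove
    obtain ⟨d₀, hd₀⟩ := s.bddBelow
    obtain ⟨b, hb1, hb2⟩ := physH_exists_pos_above (m := k + 1) (by omega) (c₀ + 1)
    obtain ⟨a, ha1', ha2⟩ := physH_exists_sign_below (m := k + 1) (by omega) (min (d₀ - 1) b)
    have ha1 : a < d₀ - 1 := lt_of_lt_of_le ha1' (min_le_left _ _)
    have hab : a < b := lt_of_lt_of_le ha1' (min_le_right _ _)
    have hbgt : ∀ i, ρ i < b := fun i => lt_of_le_of_lt (hc₀ (hρmem i)) (by linarith)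
    have halt : ∀ i, a < ρ i := fun i => lt_of_lt_of_le (by linarith) (hd₀ (hρmem i))
    -- the endpoints of the gaps
    set L : Fin (k + 1) → ℝ := fun j => if h : (j:ℕ) = 0 then a else ρ ⟨(j:ℕ) - 1, by omega⟩
      with hL
    set R : Fin (k + 1) → ℝ := fun j => if h : (j:ℕ) < k then ρ ⟨(j:ℕ), h⟩ else b with hR
    have hsignL : ∀ j : Fin (k + 1), 0 < (-1 : ℝ) ^ (k + 1 - (j:ℕ)) * eval (L j) p := by
      intro j
      simp only [hL]
      by_cases hj : (j:ℕ) = 0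
      · rw [dif_pos hj, hj]
        simpa using ha2
      · rw [dif_neg hj]
        have := hsign ⟨(j:ℕ) - 1, by omega⟩
        have hexp : k - ((j:ℕ) - 1) = k + 1 - (j:ℕ) := by omega
        rwa [hexp] at this
    have hsignR : ∀ j : Fin (k + 1), 0 < (-1 : ℝ) ^ (k - (j:ℕ)) * eval (R j) p := by
      intro j
      simp only [hR]
      by_cases hj : (j:ℕ) < k
      · rw [dif_pos hj]
        exact hsign ⟨(j:ℕ), hj⟩
      · rw [dif_neg hj]
        have hjk : (j:ℕ) = k := by omega
        rw [hjk, Nat.sub_self, pow_zero, one_mul]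
        exact hb2
    have hLR : ∀ j : Fin (k + 1), L j < R j := by
      intro j
      simp only [hL, hR]
      by_cases hj : (j:ℕ) = 0
      · rw [dif_pos hj]
        by_cases hj2 : (j:ℕ) < k
        · rw [dif_pos hj2]; exact halt _
        · rw [dif_neg hj2]
          rcases Nat.eq_zero_or_pos k with hk | hk
          · exact hab
          · exact lt_trans (halt ⟨0, hk⟩) (hbgt ⟨0, hk⟩)
      · rw [dif_neg hj]
        by_cases hj2 : (j:ℕ) < k
        · rw [dif_pos hj2]
          exact hρmono (show (⟨(j:ℕ) - 1, by omega⟩ : Fin k) < ⟨(j:ℕ), hj2⟩ by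
            rw [Fin.mk_lt_mk]; omega)
        · rw [dif_neg hj2]; exact hbgt _
    -- a root in each gap
    have hz : ∀ j : Fin (k + 1), ∃ z, z ∈ Set.Ioo (L j) (R j) ∧ eval z p = 0 := by
      intro j
      have hcont : ContinuousOn (fun x => eval x p) (Set.Icc (L j) (R j)) :=
        (Polynomial.continuous p).continuousOn
      have hLj := hsignL j
      have hRj := hsignR j
      have hexp : k + 1 - (j:ℕ) = (k - (j:ℕ)) + 1 := by omega
      rw [hexp, pow_succ] at hLj
      rcases Nat.even_or_odd (k - (j:ℕ)) with he | ho
      · rw [he.neg_one_pow] at hLj hRj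
        have h1 : eval (L j) p < 0 := by nlinarith
        have h2 : 0 < eval (R j) p := by nlinarith
        obtain ⟨z, hz1, hz2⟩ := intermediate_value_Ioo (le_of_lt (hLR j)) hcont
          (Set.mem_Ioo.mpr ⟨h1, h2⟩)
        exact ⟨z, hz1, hz2⟩
      · rw [ho.neg_one_pow] at hLj hRj
        have h1 : 0 < eval (L j) p := by nlinarith
        have h2 : eval (R j) p < 0 := by nlinarith
        obtain ⟨z, hz1, hz2⟩ := intermediate_value_Ioo' (le_of_lt (hLR j)) hcont
          (Set.mem_Ioo.mpr ⟨h2, h1⟩)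
        exact ⟨z, hz1, hz2⟩
    choose z hzmem hzroot using hz
    have hRL : ∀ i : Fin k, R i.castSucc ≤ L i.succ := by
      intro i
      simp only [hR, hL]
      have h1 : ((i.castSucc : Fin (k+1)) : ℕ) = (i : ℕ) := rfl
      have h2 : ((i.succ : Fin (k+1)) : ℕ) = (i : ℕ) + 1 := rfl
      rw [dif_pos (h1 ▸ i.2), dif_neg (by omega)]
      exact le_of_eq (congrArg ρ (Fin.ext (by simp [h1, h2])))
    have hzmono : StrictMono z := by
      rw [Fin.strictMono_iff_lt_succ]
      intro i
      calc z i.castSucc < R i.castSucc := (hzmem i.castSucc).2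
        _ ≤ L i.succ := hRL i
        _ < z i.succ := (hzmem i.succ).1
    refine ⟨Finset.image z univ, ?_, ?_⟩
    · rw [Finset.card_image_of_injective _ hzmono.injective, card_univ, Fintype.card_fin]
    · intro x hx
      obtain ⟨j, _, hj⟩ := Finset.mem_image.mp hx
      exact hj ▸ hzroot j

/-- The root set of `physH k`. -/
noncomputable def hRootSet (k : ℕ) : Finset ℝ := (physH_roots_exist k).choose

lemma hRootSet_card (k : ℕ) : (hRootSet k).card = k := (physH_roots_exist k).choose_spec.1
lemma hRootSet_root (k : ℕ) : ∀ x ∈ hRootSet k, eval x (physH k) = 0 :=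
  (physH_roots_exist k).choose_spec.2

lemma hRootSet_eq {k : ℕ} {s : Finset ℝ} (hcard : s.card = k)
    (hroot : ∀ x ∈ s, eval x (physH k) = 0) : s = hRootSet k := by
  apply Finset.eq_of_subset_of_card_le
  · intro x hx
    exact physH_root_mem (hRootSet_card k) (hRootSet_root k) x (hroot x hx)
  · rw [hRootSet_card, hcard]

lemma hRootSet_nonzero {k : ℕ} {x : ℝ} (hx : x ∈ hRootSet k) :
    eval x (physH (k + 1)) = - eval x (derivative (physH k)) := by
  rw [physH_succ, eval_sub, eval_mul, hRootSet_root k x hx, mul_zero, zero_sub]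

/-- Swap lemma : the product of `physH (k-1)` over roots of `physH k` equals
the product of `physH k` over the roots of `physH (k-1)`. -/
lemma swap_lemma (k : ℕ) :
    ∏ x ∈ hRootSet (k + 1), eval x (physH k) = ∏ y ∈ hRootSet k, eval y (physH (k + 1)) := by
  have hfack : physH k = C ((2:ℝ) ^ k) * ∏ y ∈ hRootSet k, (X - C y) :=
    physH_factor (hRootSet_card k) (hRootSet_root k)
  have hfack1 : physH (k + 1) = C ((2:ℝ) ^ (k+1)) * ∏ x ∈ hRootSet (k+1), (X - C x) :=
    physH_factor (hRootSet_card (k+1)) (hRootSet_root (k+1))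
  have h1 : ∏ x ∈ hRootSet (k + 1), eval x (physH k)
      = (2:ℝ) ^ (k * (k+1)) * ∏ x ∈ hRootSet (k+1), ∏ y ∈ hRootSet k, (x - y) := by
    rw [Finset.prod_congr rfl (fun x _ => show eval x (physH k)
        = (2:ℝ)^k * ∏ y ∈ hRootSet k, (x - y) from by rw [hfack]; simp [eval_prod])]
    rw [Finset.prod_mul_distrib, Finset.prod_const, hRootSet_card, ← pow_mul]
  have h2 : ∏ y ∈ hRootSet k, eval y (physH (k + 1))
      = (2:ℝ) ^ ((k+1) * k) * ∏ y ∈ hRootSet k, ∏ x ∈ hRootSet (k+1), (y - x) := by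
    rw [Finset.prod_congr rfl (fun y _ => show eval y (physH (k+1))
        = (2:ℝ)^(k+1) * ∏ x ∈ hRootSet (k+1), (y - x) from by rw [hfack1]; simp [eval_prod])]
    rw [Finset.prod_mul_distrib, Finset.prod_const, hRootSet_card, ← pow_mul]
  have h3 : ∏ y ∈ hRootSet k, ∏ x ∈ hRootSet (k+1), (y - x)
      = (-1:ℝ) ^ (k * (k+1)) * ∏ x ∈ hRootSet (k+1), ∏ y ∈ hRootSet k, (x - y) := by
    rw [Finset.prod_comm]
    have hinner : ∀ x ∈ hRootSet (k+1), ∏ y ∈ hRootSet k, (y - x)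
        = (-1:ℝ)^k * ∏ y ∈ hRootSet k, (x - y) := by
      intro x _
      rw [show ((-1:ℝ)^k) = ∏ _y ∈ hRootSet k, (-1:ℝ) from by
        rw [Finset.prod_const, hRootSet_card]]
      rw [← Finset.prod_mul_distrib]
      exact Finset.prod_congr rfl (fun y _ => by ring)
    rw [Finset.prod_congr rfl hinner, Finset.prod_mul_distrib, Finset.prod_const,
      hRootSet_card, ← pow_mul]
  have heven : (-1:ℝ) ^ (k * (k+1)) = 1 := (Nat.even_mul_succ_self k).neg_one_pow
  rw [h1, h2, h3, heven, mul_comm (k+1) k]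
  ring

/-- recursion for the product over roots -/
lemma prod_recursion (k : ℕ) :
    ∏ y ∈ hRootSet (k + 1), eval y (physH (k + 2))
      = (-2 * ((k:ℝ) + 1)) ^ (k + 1) * ∏ y ∈ hRootSet (k + 1), eval y (physH k) := by
  have hstep : ∀ y ∈ hRootSet (k + 1),
      eval y (physH (k + 2)) = (-2 * ((k:ℝ)+1)) * eval y (physH k) := by
    intro y hy
    rw [physH_succ (k+1), eval_sub, eval_mul, hRootSet_root _ y hy, mul_zero, zero_sub,
      physH_deriv k, eval_mul, eval_C]
    ring
  rw [Finset.prod_congr rfl hstep, Finset.prod_mul_distrib, Finset.prod_const, hRootSet_card]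

lemma hRootSet_one : hRootSet 1 = {0} := by
  symm
  apply hRootSet_eq (by simp)
  intro x hx
  simp only [Finset.mem_singleton] at hx
  rw [hx, physH_succ, physH_zero']
  simp

/-- Closed form for `A k = ∏_{x ∈ hRootSet k} physH (k-1) x`. -/
lemma A_formula : ∀ k : ℕ, ∏ x ∈ hRootSet (k + 1), eval x (physH k)
    = ∏ m ∈ Finset.range (k + 1), (-2 * (m:ℝ)) ^ m := by
  intro k
  induction k with
  | zero => simp [hRootSet_one, physH_zero']
  | succ k ih =>
    rw [swap_lemma (k+1), prod_recursion k, ih]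
    conv_rhs => rw [Finset.prod_range_succ]
    push_cast
    ring

lemma deriv_prod_X_sub_C {ι : Type*} [DecidableEq ι] (t : Finset ι) (a : ι → ℝ) :
    derivative (∏ j ∈ t, (X - C (a j))) = ∑ j ∈ t, ∏ k ∈ t.erase j, (X - C (a k)) := by
  induction t using Finset.induction with
  | empty => simp
  | insert i t' hi ih =>
    rw [Finset.prod_insert hi, derivative_mul, ih, Finset.sum_insert hi,
      Finset.erase_insert hi]
    simp only [derivative_sub, derivative_X, derivative_C, sub_zero, one_mul]
    rw [Finset.mul_sum]
    congr 1
    refine Finset.sum_congr rfl (fun j hj => ?_)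
    rw [Finset.erase_insert_of_ne (by rintro rfl; exact hi hj), Finset.prod_insert
      (fun hmem => hi (Finset.mem_of_mem_erase hmem))]

section toplevel
variable {N : ℕ} {h : Fin N → ℝ}

lemma himage_card (hinj : Function.Injective h) : (Finset.image h univ).card = N := by
  rw [Finset.card_image_of_injective _ hinj, card_univ, Fintype.card_fin]

lemma himage_root (hzero : ∀ i, eval (h i) (physH N) = 0) :
    ∀ x ∈ Finset.image h univ, eval x (physH N) = 0 := by
  intro x hx
  obtain ⟨i, _, hi⟩ := Finset.mem_image.mp hx
  exact hi ▸ hzero i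

lemma hfac (hinj : Function.Injective h) (hzero : ∀ i, eval (h i) (physH N) = 0) :
    physH N = C ((2:ℝ) ^ N) * ∏ i, (X - C (h i)) := by
  rw [physH_factor (himage_card hinj) (himage_root hzero)]
  congr 1
  exact Finset.prod_image (fun a _ b _ hab => hinj hab)

lemma hDeval (hinj : Function.Injective h) (hzero : ∀ i, eval (h i) (physH N) = 0) (i : Fin N) :
    eval (h i) (derivative (physH N)) = 2 ^ N * ∏ j ∈ univ.erase i, (h i - h j) := by
  rw [physH_deriv_eval (himage_card hinj) (himage_root hzero)
    (Finset.mem_image_of_mem h (mem_univ i))]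
  congr 1
  rw [← Finset.image_erase hinj, Finset.prod_image (fun a _ b _ hab => hinj hab)]

lemma hprod_ne (hinj : Function.Injective h) (i : Fin N) :
    ∏ j ∈ univ.erase i, (h i - h j) ≠ 0 := by
  refine Finset.prod_ne_zero_iff.mpr (fun j hj => sub_ne_zero.mpr ?_)
  exact fun hc => Finset.ne_of_mem_erase hj (hinj hc).symm

lemma hDne (hinj : Function.Injective h) (hzero : ∀ i, eval (h i) (physH N) = 0) (i : Fin N) :
    eval (h i) (derivative (physH N)) ≠ 0 := by
  rw [hDeval hinj hzero i]
  exact mul_ne_zero (by positivity) (hprod_ne hinj i)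

lemma erase_erase_comm (i l : Fin N) :
    (univ.erase l).erase i = ((univ.erase i).erase l : Finset (Fin N)) := by
  ext a
  simp only [Finset.mem_erase, mem_univ, and_true]
  tauto

lemma hD2eval (hinj : Function.Injective h) (hzero : ∀ i, eval (h i) (physH N) = 0) (i : Fin N) :
    eval (h i) (derivative (derivative (physH N)))
      = 2 ^ N * (2 * ∑ j ∈ univ.erase i, ∏ k ∈ (univ.erase i).erase j, (h i - h k)) := by
  have hD : derivative (physH N) = C ((2:ℝ)^N) * ∑ l, ∏ k ∈ univ.erase l, (X - C (h k)) := by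
    conv_lhs => rw [hfac hinj hzero]
    rw [derivative_C_mul, deriv_prod_X_sub_C]
  have hD2 : derivative (derivative (physH N))
      = C ((2:ℝ)^N) * ∑ l, ∑ j ∈ univ.erase l, ∏ k ∈ (univ.erase l).erase j, (X - C (h k)) := by
    rw [hD, derivative_C_mul]
    congr 1
    rw [map_sum derivative _ univ]
    exact Finset.sum_congr rfl (fun l _ => deriv_prod_X_sub_C _ _)
  rw [hD2, eval_mul, eval_C]
  congr 1
  rw [eval_finset_sum]
  rw [← Finset.add_sum_erase _ _ (mem_univ i)]
  have hterm1 : eval (h i) (∑ j ∈ univ.erase i, ∏ k ∈ (univ.erase i).erase j, (X - C (h k)))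
      = ∑ j ∈ univ.erase i, ∏ k ∈ (univ.erase i).erase j, (h i - h k) := by
    rw [eval_finset_sum]
    refine Finset.sum_congr rfl (fun j _ => ?_)
    rw [eval_prod]
    exact Finset.prod_congr rfl (fun k _ => by simp)
  have hterm2 : ∀ l ∈ univ.erase i,
      eval (h i) (∑ j ∈ univ.erase l, ∏ k ∈ (univ.erase l).erase j, (X - C (h k)))
        = ∏ k ∈ (univ.erase i).erase l, (h i - h k) := by
    intro l hl
    have hli : l ≠ i := Finset.ne_of_mem_erase hl
    rw [eval_finset_sum]
    rw [Finset.sum_eq_single_of_mem i (Finset.mem_erase.mpr ⟨fun hc => hli hc.symm, mem_univ i⟩)]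
    · rw [eval_prod, erase_erase_comm]
      exact Finset.prod_congr rfl (fun k _ => by simp)
    · intro j hj hji
      rw [eval_prod]
      refine Finset.prod_eq_zero (i := i) ?_ (by simp)
      exact Finset.mem_erase.mpr ⟨fun hc => hji hc.symm,
        Finset.mem_erase.mpr ⟨fun hc => hli hc.symm, mem_univ i⟩⟩
  rw [hterm1, Finset.sum_congr rfl hterm2]
  ring

lemma critical_eq (hinj : Function.Injective h) (hzero : ∀ i, eval (h i) (physH N) = 0)
    (i : Fin N) : h i = ∑ j ∈ univ.erase i, (h i - h j)⁻¹ := by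
  have heval := congrArg (eval (h i)) (physH_ode N)
  simp only [eval_sub, eval_mul, eval_C, eval_X, eval_ofNat, hzero i, mul_zero] at heval
  rw [hD2eval hinj hzero i, hDeval hinj hzero i] at heval
  have hkey : h i * ∏ j ∈ univ.erase i, (h i - h j)
      = ∑ j ∈ univ.erase i, ∏ k ∈ (univ.erase i).erase j, (h i - h k) := by
    have hfield : (2 * (2:ℝ)^N) ≠ 0 := by positivity
    refine mul_left_cancel₀ hfield ?_
    linear_combination heval
  have hsub : ∀ j ∈ univ.erase i, ∏ k ∈ (univ.erase i).erase j, (h i - h k)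
      = (h i - h j)⁻¹ * ∏ k ∈ univ.erase i, (h i - h k) := by
    intro j hj
    have hne : h i - h j ≠ 0 := sub_ne_zero.mpr
      (fun hc => Finset.ne_of_mem_erase hj (hinj hc).symm)
    rw [← Finset.mul_prod_erase _ _ hj, inv_mul_cancel_left₀ hne]
  rw [Finset.sum_congr rfl hsub, ← Finset.sum_mul] at hkey
  exact mul_right_cancel₀ (hprod_ne hinj i) hkey

end toplevel

lemma univ_erase_eq' {k : ℕ} (i : Fin k) : (univ.erase i) = Iio i ∪ Ioi i := by
  ext j
  simp only [mem_erase, mem_univ, and_true, mem_union, mem_Iio, mem_Ioi]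
  constructor
  · intro hj
    exact lt_or_gt_of_ne hj
  · rintro (hj | hj) <;> [exact ne_of_lt hj; exact ne_of_gt hj]

lemma Iio_Ioi_disj {k : ℕ} (i : Fin k) : Disjoint (Iio i) (Ioi i) :=
  Finset.disjoint_left.mpr (fun j hj hj' => absurd (mem_Ioi.mp hj')
    (not_lt.mpr (le_of_lt (mem_Iio.mp hj))))

lemma pair_swap_prod {k : ℕ} (f : Fin k → Fin k → ℝ) :
    ∏ i, ∏ j ∈ Iio i, f i j = ∏ i, ∏ j ∈ Ioi i, f j i := by
  exact Finset.prod_comm' (fun {x y} => by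
    simp only [mem_univ, true_and, mem_Iio, mem_Ioi, and_comm])

lemma pair_swap_sum {k : ℕ} (f : Fin k → Fin k → ℝ) :
    ∑ i, ∑ j ∈ Iio i, f i j = ∑ i, ∑ j ∈ Ioi i, f j i := by
  exact Finset.sum_comm' (fun {x y} => by
    simp only [mem_univ, true_and, mem_Iio, mem_Ioi, and_comm])

lemma two_M_eq (k : ℕ) : 2 * ∑ i : Fin k, (Ioi i).card = k * (k - 1) := by
  have h1 : ∑ i : Fin k, (Ioi i).card = ∑ i ∈ Finset.range k, (k - 1 - i) := by
    rw [← Fin.sum_univ_eq_sum_range (fun i => k - 1 - i)]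
    exact Finset.sum_congr rfl (fun i _ => by rw [Fin.card_Ioi])
  rw [h1]
  have h2 : ∑ i ∈ Finset.range k, (k - 1 - i) = ∑ i ∈ Finset.range k, i := by
    have := Finset.sum_range_reflect (fun m => k - 1 - m) k
    calc ∑ i ∈ Finset.range k, (k - 1 - i) = ∑ i ∈ Finset.range k, (k - 1 - (k - 1 - i)) := by
          rw [this]
      _ = ∑ i ∈ Finset.range k, i := by
          refine Finset.sum_congr rfl (fun i hi => ?_)
          have := Finset.mem_range.mp hi
          omega
  rw [h2, mul_comm]
  exact Finset.sum_range_id_mul_two k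

section toplevel2
variable {N : ℕ} {h : Fin N → ℝ}

lemma sum_sq (hinj : Function.Injective h) (hzero : ∀ i, eval (h i) (physH N) = 0) :
    ∑ i, (h i)^2 = (N:ℝ) * ((N:ℝ) - 1) / 2 := by
  have hMnat := two_M_eq N
  have h1 : ∀ i : Fin N, (h i)^2 = ∑ j ∈ univ.erase i, h i * (h i - h j)⁻¹ := by
    intro i
    rw [← Finset.mul_sum, sq]
    congr 1
    exact critical_eq hinj hzero i
  rw [Finset.sum_congr rfl (fun i _ => h1 i)]
  have hsplit : ∀ i : Fin N, ∑ j ∈ univ.erase i, h i * (h i - h j)⁻¹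
      = (∑ j ∈ Iio i, h i * (h i - h j)⁻¹) + ∑ j ∈ Ioi i, h i * (h i - h j)⁻¹ := by
    intro i
    rw [univ_erase_eq' i, Finset.sum_union (Iio_Ioi_disj i)]
  rw [Finset.sum_congr rfl (fun i _ => hsplit i), Finset.sum_add_distrib,
    pair_swap_sum (fun i j => h i * (h i - h j)⁻¹), ← Finset.sum_add_distrib]
  have hone : ∀ i : Fin N, ((∑ j ∈ Ioi i, h j * (h j - h i)⁻¹)
      + ∑ j ∈ Ioi i, h i * (h i - h j)⁻¹) = ∑ j ∈ Ioi i, (1:ℝ) := by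
    intro i
    rw [← Finset.sum_add_distrib]
    refine Finset.sum_congr rfl (fun j hj => ?_)
    have hne : h i - h j ≠ 0 := sub_ne_zero.mpr
      (fun hc => ne_of_gt (mem_Ioi.mp hj) (hinj hc.symm))
    have hne' : h j - h i ≠ 0 := fun hc => hne (by linarith [sub_eq_zero.mp hc])
    field_simp
    ring
  rw [Finset.sum_congr rfl (fun i _ => hone i)]
  simp only [Finset.sum_const, nsmul_eq_mul, mul_one]
  rcases Nat.eq_zero_or_pos N with h0 | h0
  · subst h0
    simp
  · have h2 : ((2 * (∑ i : Fin N, (Ioi i).card) : ℕ) : ℝ) = ((N * (N-1) : ℕ) : ℝ) := by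
      exact_mod_cast congrArg (fun n : ℕ => (n:ℝ)) hMnat
    push_cast [Nat.cast_sub (by omega : 1 ≤ N)] at h2
    linarith

lemma discr_eq (hinj : Function.Injective h) (hzero : ∀ i, eval (h i) (physH N) = 0)
    (hN : 1 ≤ N) :
    (2:ℝ) ^ (∑ i : Fin N, (Ioi i).card) * ∏ i, ∏ j ∈ Ioi i, (h j - h i)^2
      = ∏ m ∈ Finset.Icc 1 N, (m:ℝ)^m := by
  obtain ⟨n', rfl⟩ : ∃ n', N = n' + 1 := ⟨N - 1, by omega⟩
  -- (a)
  have ha : ∏ i, eval (h i) (derivative (physH (n'+1)))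
      = (2*((n':ℝ)+1))^(n'+1) * ∏ m ∈ Finset.range (n'+1), (-2 * (m:ℝ))^m := by
    have hd : ∀ i : Fin (n'+1), eval (h i) (derivative (physH (n'+1)))
        = (2*((n':ℝ)+1)) * eval (h i) (physH n') := by
      intro i
      rw [physH_deriv n', eval_mul, eval_C]
    rw [Finset.prod_congr rfl (fun i _ => hd i), Finset.prod_mul_distrib, Finset.prod_const,
      card_univ, Fintype.card_fin]
    congr 1
    have him : Finset.image h univ = hRootSet (n'+1) :=
      hRootSet_eq (himage_card hinj) (himage_root hzero)
    rw [← A_formula n', ← him, Finset.prod_image (fun a _ b _ hab => hinj hab)]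
  -- (b) + (c)
  have hb : ∏ i, eval (h i) (derivative (physH (n'+1)))
      = ((2:ℝ)^(n'+1))^(n'+1) * ((-1:ℝ)^(∑ i : Fin (n'+1), (Ioi i).card)
        * ∏ i, ∏ j ∈ Ioi i, (h j - h i)^2) := by
    rw [Finset.prod_congr rfl (fun i _ => hDeval hinj hzero i), Finset.prod_mul_distrib,
      Finset.prod_const, card_univ, Fintype.card_fin]
    congr 1
    have hsplit : ∀ i : Fin (n'+1), ∏ j ∈ univ.erase i, (h i - h j)
        = (∏ j ∈ Iio i, (h i - h j)) * ∏ j ∈ Ioi i, (h i - h j) := by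
      intro i
      rw [univ_erase_eq' i, Finset.prod_union (Iio_Ioi_disj i)]
    rw [Finset.prod_congr rfl (fun i _ => hsplit i), Finset.prod_mul_distrib,
      pair_swap_prod (fun i j => h i - h j), ← Finset.prod_mul_distrib]
    have hin : ∀ i : Fin (n'+1), (∏ j ∈ Ioi i, (h j - h i)) * ∏ j ∈ Ioi i, (h i - h j)
        = (-1:ℝ)^(Ioi i).card * ∏ j ∈ Ioi i, (h j - h i)^2 := by
      intro i
      rw [← Finset.prod_mul_distrib, ← Finset.prod_const (-1:ℝ), ← Finset.prod_mul_distrib]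
      exact Finset.prod_congr rfl (fun j _ => by ring)
    rw [Finset.prod_congr rfl (fun i _ => hin i), Finset.prod_mul_distrib,
      Finset.prod_pow_eq_pow_sum]
  -- (d)
  have hM' : ∑ m ∈ Finset.range (n'+1), m = ∑ i : Fin (n'+1), (Ioi i).card := by
    have h1 := two_M_eq (n'+1)
    have h2 := Finset.sum_range_id_mul_two (n'+1)
    omega
  have hdd : ∏ m ∈ Finset.range (n'+1), (-2 * (m:ℝ))^m
      = (-1:ℝ)^(∑ i : Fin (n'+1), (Ioi i).card)
        * ((2:ℝ)^(∑ i : Fin (n'+1), (Ioi i).card) * ∏ m ∈ Finset.range (n'+1), (m:ℝ)^m) := by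
    have hfac : ∀ m ∈ Finset.range (n'+1), (-2 * (m:ℝ))^m = (-1:ℝ)^m * ((2:ℝ)^m * (m:ℝ)^m) := by
      intro m _
      rw [show (-2 * (m:ℝ)) = (-1) * (2 * (m:ℝ)) by ring, mul_pow, mul_pow]
    rw [Finset.prod_congr rfl hfac, Finset.prod_mul_distrib, Finset.prod_mul_distrib,
      Finset.prod_pow_eq_pow_sum, Finset.prod_pow_eq_pow_sum, hM']
  -- (f)
  have hf : ((n':ℝ)+1)^(n'+1) * ∏ m ∈ Finset.range (n'+1), (m:ℝ)^m
      = ∏ m ∈ Finset.Icc 1 (n'+1), (m:ℝ)^m := by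
    have hins : Finset.range (n'+1+1) = insert 0 (Finset.Icc 1 (n'+1)) := by
      ext m
      simp only [Finset.mem_range, Finset.mem_insert, Finset.mem_Icc]
      omega
    have h1 : ∏ m ∈ Finset.range (n'+1+1), (m:ℝ)^m
        = (∏ m ∈ Finset.range (n'+1), (m:ℝ)^m) * ((n'+1:ℕ):ℝ)^(n'+1) :=
      Finset.prod_range_succ _ _
    have h2 : ∏ m ∈ Finset.range (n'+1+1), (m:ℝ)^m = ∏ m ∈ Finset.Icc 1 (n'+1), (m:ℝ)^m := by
      rw [hins, Finset.prod_insert (by simp)]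
      norm_num
    rw [← h2, h1, mul_comm]
    push_cast
    ring
  -- exponent bookkeeping
  have hNN : (n'+1) * (n'+1) = (n'+1) + ((∑ i : Fin (n'+1), (Ioi i).card)
      + (∑ i : Fin (n'+1), (Ioi i).card)) := by
    have h1 := two_M_eq (n'+1)
    have h2 : (n'+1) * ((n'+1) - 1) = (n'+1) * n' := by simp
    have h3 : (n'+1) * (n'+1) = (n'+1) * n' + (n'+1) := by ring
    omega
  have hm1 : ((-1:ℝ)^(∑ i : Fin (n'+1), (Ioi i).card)) ≠ 0 := by
    rcases Nat.even_or_odd (∑ i : Fin (n'+1), (Ioi i).card) with he | ho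
    · rw [he.neg_one_pow]; norm_num
    · rw [ho.neg_one_pow]; norm_num
  have h2N : ((2:ℝ)^(n'+1)) ≠ 0 := by positivity
  have h2M : ((2:ℝ)^(∑ i : Fin (n'+1), (Ioi i).card)) ≠ 0 := by positivity
  have hpow : ((2:ℝ)^(n'+1))^(n'+1) = (2:ℝ)^(n'+1)
      * ((2:ℝ)^(∑ i : Fin (n'+1), (Ioi i).card) * (2:ℝ)^(∑ i : Fin (n'+1), (Ioi i).card)) := by
    rw [← pow_mul, ← pow_add, ← pow_add, hNN]
  have hcomb := hb.symm.trans ha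
  rw [hdd, hpow] at hcomb
  -- cancel the sign
  have hcomb2 : (2:ℝ)^(n'+1) * ((2:ℝ)^(∑ i : Fin (n'+1), (Ioi i).card)
        * ((2:ℝ)^(∑ i : Fin (n'+1), (Ioi i).card) * ∏ i, ∏ j ∈ Ioi i, (h j - h i)^2))
      = (2*((n':ℝ)+1))^(n'+1) * ((2:ℝ)^(∑ i : Fin (n'+1), (Ioi i).card)
        * ∏ m ∈ Finset.range (n'+1), (m:ℝ)^m) := by
    apply mul_left_cancel₀ hm1
    linear_combination hcomb
  rw [mul_pow] at hcomb2
  have hfinal : (2:ℝ)^(∑ i : Fin (n'+1), (Ioi i).card) * ∏ i, ∏ j ∈ Ioi i, (h j - h i)^2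
      = ((n':ℝ)+1)^(n'+1) * ∏ m ∈ Finset.range (n'+1), (m:ℝ)^m := by
    apply mul_left_cancel₀ h2N
    apply mul_left_cancel₀ h2M
    linear_combination hcomb2
  rw [hfinal, hf]

end toplevel2

section analysis
variable {N : ℕ} {h : Fin N → ℝ}

-- affine helper
lemma affine_hasDerivAt (a b t : ℝ) : HasDerivAt (fun t : ℝ => a + t * b) b t := by
  simpa using ((hasDerivAt_id t).mul_const b).const_add a

lemma sorted_case (hmono : StrictMono h)
    (hcrit : ∀ i, h i = ∑ j ∈ univ.erase i, (h i - h j)⁻¹)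
    (v : Fin N → ℝ) (hv : StrictMono v) (hvh : v ≠ h) :
    (1/2) * ∑ i, (h i)^2 - ∑ i, ∑ j ∈ Ioi i, Real.log (h j - h i)
      < (1/2) * ∑ i, (v i)^2 - ∑ i, ∑ j ∈ Ioi i, Real.log (v j - v i) := by
  classical
  set d : Fin N → ℝ := fun i => v i - h i with hd
  set g : ℝ → ℝ := fun t => (1/2) * ∑ i, (h i + t * d i)^2
      - ∑ i, ∑ j ∈ Ioi i, Real.log ((h j - h i) + t * (d j - d i)) with hg
  set g' : ℝ → ℝ := fun t => (1/2) * ∑ i, (2 * (h i + t * d i) * d i)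
      - ∑ i, ∑ j ∈ Ioi i, (d j - d i) / ((h j - h i) + t * (d j - d i)) with hg'
  set g'' : ℝ → ℝ := fun t => (1/2) * ∑ i, (2 * (d i * d i))
      - ∑ i, ∑ j ∈ Ioi i, (-((d j - d i) * (d j - d i))
          / ((h j - h i) + t * (d j - d i))^2) with hg''
  have hpos : ∀ t ∈ Set.Icc (0:ℝ) 1, ∀ i j : Fin N, i < j →
      0 < (h j - h i) + t * (d j - d i) := by
    intro t ht i j hij
    have h1 : 0 < h j - h i := sub_pos.mpr (hmono hij)
    have h2 : 0 < v j - v i := sub_pos.mpr (hv hij)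
    have : (h j - h i) + t * (d j - d i) = (1 - t) * (h j - h i) + t * (v j - v i) := by
      simp only [hd]
      ring
    rw [this]
    rcases eq_or_lt_of_le ht.1 with h0 | h0
    · rw [← h0]
      norm_num
      exact hmono hij
    · have ht1 : (0:ℝ) ≤ 1 - t := by linarith [ht.2]
      have f1 : 0 ≤ (1 - t) * (h j - h i) := mul_nonneg ht1 h1.le
      have f2 : 0 < t * (v j - v i) := mul_pos h0 h2
      linarith
  have hgderiv : ∀ t ∈ Set.Icc (0:ℝ) 1, HasDerivAt g (g' t) t := by
    intro t ht
    have h1 : HasDerivAt (fun t => (1/2) * ∑ i, (h i + t * d i)^2)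
        ((1/2) * ∑ i, (2 * (h i + t * d i) * d i)) t := by
      refine HasDerivAt.const_mul _ (HasDerivAt.fun_sum (fun i _ => ?_))
      simpa using (affine_hasDerivAt (h i) (d i) t).fun_pow 2
    have h2 : HasDerivAt (fun t => ∑ i, ∑ j ∈ Ioi i, Real.log ((h j - h i) + t * (d j - d i)))
        (∑ i, ∑ j ∈ Ioi i, (d j - d i) / ((h j - h i) + t * (d j - d i))) t := by
      refine HasDerivAt.fun_sum (fun i _ => HasDerivAt.fun_sum (fun j hj => ?_))
      exact (affine_hasDerivAt (h j - h i) (d j - d i) t).log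
        (ne_of_gt (hpos t ht i j (mem_Ioi.mp hj)))
    exact h1.sub h2
  have hg'deriv : ∀ t ∈ Set.Icc (0:ℝ) 1, HasDerivAt g' (g'' t) t := by
    intro t ht
    have h1 : HasDerivAt (fun t => (1/2) * ∑ i, (2 * (h i + t * d i) * d i))
        ((1/2) * ∑ i, (2 * (d i * d i))) t := by
      refine HasDerivAt.const_mul _ (HasDerivAt.fun_sum (fun i _ => ?_))
      simpa [mul_assoc] using ((affine_hasDerivAt (h i) (d i) t).const_mul 2).mul_const (d i)
    have h2 : HasDerivAt
        (fun t => ∑ i, ∑ j ∈ Ioi i, (d j - d i) / ((h j - h i) + t * (d j - d i)))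
        (∑ i, ∑ j ∈ Ioi i, (-((d j - d i) * (d j - d i))
          / ((h j - h i) + t * (d j - d i))^2)) t := by
      refine HasDerivAt.fun_sum (fun i _ => HasDerivAt.fun_sum (fun j hj => ?_))
      have hne := ne_of_gt (hpos t ht i j (mem_Ioi.mp hj))
      have hinv : HasDerivAt (fun t => ((h j - h i) + t * (d j - d i))⁻¹)
          (-(d j - d i) / ((h j - h i) + t * (d j - d i))^2) t :=
        (affine_hasDerivAt (h j - h i) (d j - d i) t).inv hne
      have := hinv.const_mul (d j - d i)
      simp only [div_eq_mul_inv]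
      convert this using 1
      · rfl
      · ring
    exact h1.sub h2
  -- g'' is positive on Icc 0 1
  obtain ⟨i₀, hi₀⟩ : ∃ i, d i ≠ 0 := by
    by_contra hc
    push_neg at hc
    refine hvh (funext (fun i => ?_))
    have := hc i
    simp only [hd] at this
    exact sub_eq_zero.mp this
  have hg''pos : ∀ t ∈ Set.Icc (0:ℝ) 1, 0 < g'' t := by
    intro t ht
    simp only [hg'']
    have hsum1 : 0 < ∑ i, (2 * (d i * d i)) := by
      refine Finset.sum_pos' (fun i _ => by nlinarith [mul_self_nonneg (d i)]) ⟨i₀, mem_univ i₀, ?_⟩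
      have hsq : 0 < d i₀ * d i₀ := mul_self_pos.mpr hi₀
      linarith
    have hsum2 : ∑ i, ∑ j ∈ Ioi i, (-((d j - d i) * (d j - d i))
        / ((h j - h i) + t * (d j - d i))^2) ≤ 0 := by
      refine Finset.sum_nonpos (fun i _ => Finset.sum_nonpos (fun j hj => ?_))
      have hne := hpos t ht i j (mem_Ioi.mp hj)
      have : 0 ≤ ((d j - d i) * (d j - d i)) / ((h j - h i) + t * (d j - d i))^2 :=
        div_nonneg (mul_self_nonneg _) (sq_nonneg _)
      rw [neg_div]
      linarith
    linarith
  -- g' 0 = 0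
  have hg'0 : g' 0 = 0 := by
    simp only [hg', zero_mul, add_zero, mul_zero]
    have hswap : ∑ i, ∑ j ∈ Ioi i, (d j - d i) / (h j - h i)
        = ∑ i, d i * h i := by
      have hsplit : ∀ i j : Fin N, i ≠ j → True := fun _ _ _ => trivial
      have e1 : ∀ i : Fin N, ∀ j ∈ Ioi i, (d j - d i) / (h j - h i)
          = d j * (h j - h i)⁻¹ + d i * (h i - h j)⁻¹ := by
        intro i j hj
        have hne : h j - h i ≠ 0 := ne_of_gt (sub_pos.mpr (hmono (mem_Ioi.mp hj)))
        have hne' : h i - h j ≠ 0 := fun hc => hne (by linarith [sub_eq_zero.mp hc])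
        field_simp
        ring
      rw [Finset.sum_congr rfl (fun i _ => Finset.sum_congr rfl (e1 i))]
      rw [Finset.sum_congr rfl (fun i _ => Finset.sum_add_distrib)]
      rw [Finset.sum_add_distrib]
      rw [← pair_swap_sum (fun i j => d i * (h i - h j)⁻¹)]
      rw [← Finset.sum_add_distrib]
      have e2 : ∀ i : Fin N, ((∑ j ∈ Iio i, d i * (h i - h j)⁻¹)
          + ∑ j ∈ Ioi i, d i * (h i - h j)⁻¹) = d i * h i := by
        intro i
        rw [← Finset.sum_union (Iio_Ioi_disj i), ← univ_erase_eq' i, ← Finset.mul_sum]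
        rw [← hcrit i]
      exact Finset.sum_congr rfl (fun i _ => e2 i)
    rw [hswap]
    rw [Finset.mul_sum]
    rw [← Finset.sum_sub_distrib]
    refine Finset.sum_eq_zero (fun i _ => by ring)
  -- g' is strictly monotone on Icc 0 1
  have hcontg' : ContinuousOn g' (Set.Icc 0 1) :=
    fun t ht => (hg'deriv t ht).continuousAt.continuousWithinAt
  have hSMg' : StrictMonoOn g' (Set.Icc 0 1) := by
    refine strictMonoOn_of_deriv_pos (convex_Icc 0 1) hcontg' (fun t ht => ?_)
    rw [interior_Icc] at ht
    have htIcc : t ∈ Set.Icc (0:ℝ) 1 := ⟨le_of_lt ht.1, le_of_lt ht.2⟩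
    rw [(hg'deriv t htIcc).deriv]
    exact hg''pos t htIcc
  have hg'pos : ∀ t ∈ Set.Ioo (0:ℝ) 1, 0 < g' t := by
    intro t ht
    have := hSMg' (Set.mem_Icc.mpr ⟨le_refl 0, by norm_num⟩)
      (Set.mem_Icc.mpr ⟨le_of_lt ht.1, le_of_lt ht.2⟩) ht.1
    rw [hg'0] at this
    exact this
  have hcontg : ContinuousOn g (Set.Icc 0 1) :=
    fun t ht => (hgderiv t ht).continuousAt.continuousWithinAt
  have hSMg : StrictMonoOn g (Set.Icc 0 1) := by
    refine strictMonoOn_of_deriv_pos (convex_Icc 0 1) hcontg (fun t ht => ?_)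
    rw [interior_Icc] at ht
    have htIcc : t ∈ Set.Icc (0:ℝ) 1 := ⟨le_of_lt ht.1, le_of_lt ht.2⟩
    rw [(hgderiv t htIcc).deriv]
    exact hg'pos t ht
  have hfinal := hSMg (Set.mem_Icc.mpr ⟨le_refl 0, by norm_num⟩)
    (Set.mem_Icc.mpr ⟨by norm_num, le_refl 1⟩) (by norm_num : (0:ℝ) < 1)
  have hg0 : g 0 = (1/2) * ∑ i, (h i)^2 - ∑ i, ∑ j ∈ Ioi i, Real.log (h j - h i) := by
    simp only [hg, zero_mul, add_zero, mul_zero]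
  have hg1 : g 1 = (1/2) * ∑ i, (v i)^2 - ∑ i, ∑ j ∈ Ioi i, Real.log (v j - v i) := by
    simp only [hg, hd, one_mul]
    congr 1
    · congr 1
      exact Finset.sum_congr rfl (fun i _ => by ring_nf)
    · refine Finset.sum_congr rfl (fun i _ => Finset.sum_congr rfl (fun j _ => ?_))
      congr 1
      ring
  rw [hg0, hg1] at hfinal
  exact hfinal

end analysis

-- ### permutation invariance
lemma U_eq {N : ℕ} (v : Fin N → ℝ) :
    ∑ i, ∑ j ∈ univ.erase i, Real.log |v i - v j|
      = 2 * ∑ i, ∑ j ∈ Ioi i, Real.log |v j - v i| := by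
  have hsplit : ∀ i : Fin N, ∑ j ∈ univ.erase i, Real.log |v i - v j|
      = (∑ j ∈ Iio i, Real.log |v i - v j|) + ∑ j ∈ Ioi i, Real.log |v i - v j| := by
    intro i
    rw [univ_erase_eq' i, Finset.sum_union (Iio_Ioi_disj i)]
  rw [Finset.sum_congr rfl (fun i _ => hsplit i), Finset.sum_add_distrib,
    pair_swap_sum (fun i j => Real.log |v i - v j|)]
  have h2 : ∀ i : Fin N, ∑ j ∈ Ioi i, Real.log |v i - v j|
      = ∑ j ∈ Ioi i, Real.log |v j - v i| := by
    intro i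
    exact Finset.sum_congr rfl (fun j _ => by rw [abs_sub_comm])
  rw [Finset.sum_congr rfl (fun i _ => h2 i)]
  ring

lemma U_perm {N : ℕ} (v : Fin N → ℝ) (σ : Equiv.Perm (Fin N)) :
    ∑ i, ∑ j ∈ univ.erase i, Real.log |v (σ i) - v (σ j)|
      = ∑ i, ∑ j ∈ univ.erase i, Real.log |v i - v j| := by
  have hinner : ∀ i : Fin N, ∑ j ∈ univ.erase i, Real.log |v (σ i) - v (σ j)|
      = ∑ j ∈ univ.erase (σ i), Real.log |v (σ i) - v j| := by
    intro i
    rw [show ∑ j ∈ univ.erase i, Real.log |v (σ i) - v (σ j)|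
        = ∑ j ∈ Finset.image σ (univ.erase i), Real.log |v (σ i) - v j| from
      (Finset.sum_image (f := fun j => Real.log |v (σ i) - v j|) (g := ⇑σ)
        (fun a _ b _ hab => σ.injective hab)).symm]
    rw [Finset.image_erase σ.injective, Finset.image_univ_equiv]
  rw [Finset.sum_congr rfl (fun i _ => hinner i)]
  exact Equiv.sum_comp σ (fun a => ∑ j ∈ univ.erase a, Real.log |v a - v j|)

lemma logsum_perm {N : ℕ} (v : Fin N → ℝ) (σ : Equiv.Perm (Fin N)) :
    ∑ i, ∑ j ∈ Ioi i, Real.log |v (σ j) - v (σ i)|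
      = ∑ i, ∑ j ∈ Ioi i, Real.log |v j - v i| := by
  have h1 := U_eq (fun i => v (σ i))
  have h2 := U_perm v σ
  have h3 := U_eq v
  linarith

lemma sq_perm {N : ℕ} (v : Fin N → ℝ) (σ : Equiv.Perm (Fin N)) :
    ∑ i, (v (σ i))^2 = ∑ i, (v i)^2 :=
  Equiv.sum_comp σ (fun i => (v i)^2)

lemma strictMono_unique {k : ℕ} {f g : Fin k → ℝ} (hf : StrictMono f) (hg : StrictMono g)
    (him : Finset.image f univ = Finset.image g univ) : f = g := by
  have hcard : (Finset.image f univ).card = k := by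
    rw [Finset.card_image_of_injective _ hf.injective, card_univ, Fintype.card_fin]
  have h1 := Finset.orderEmbOfFin_unique hcard
    (fun x => Finset.mem_image_of_mem f (mem_univ x)) hf
  have h2 := Finset.orderEmbOfFin_unique hcard
    (fun x => him ▸ Finset.mem_image_of_mem g (mem_univ x)) hg
  funext x
  exact (congrFun h1 x).trans (congrFun h2 x).symm

-- ### the value computation
lemma M_cast {N : ℕ} (hN : 1 ≤ N) :
    ((∑ i : Fin N, (Ioi i).card : ℕ) : ℝ) = (N:ℝ) * ((N:ℝ) - 1) / 2 := by
  have h2 : ((2 * (∑ i : Fin N, (Ioi i).card) : ℕ) : ℝ) = ((N * (N-1) : ℕ) : ℝ) := by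
    exact_mod_cast congrArg (fun n : ℕ => (n:ℝ)) (two_M_eq N)
  push_cast [Nat.cast_sub hN] at h2 ⊢
  linarith

lemma value_eq {N : ℕ} {h : Fin N → ℝ} (hmono : StrictMono h)
    (hzero : ∀ i, eval (h i) (physH N) = 0) (hN : 1 ≤ N) :
    (1/2) * ∑ i, (h i)^2 - ∑ i, ∑ j ∈ Ioi i, Real.log (h j - h i)
      = ((N:ℝ)/4) * ((N:ℝ)-1) * (1 + Real.log 2)
        - (1/2) * ∑ m ∈ Finset.Icc 1 N, (m:ℝ) * Real.log m := by
  have hsq := sum_sq hmono.injective hzero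
  have hdiscr := discr_eq hmono.injective hzero hN
  have hMc := M_cast hN
  have hDpos : ∀ i : Fin N, ∀ j ∈ Ioi i, (0:ℝ) < h j - h i :=
    fun i j hj => sub_pos.mpr (hmono (mem_Ioi.mp hj))
  have hlogD : Real.log (∏ i, ∏ j ∈ Ioi i, (h j - h i)^2)
      = 2 * ∑ i, ∑ j ∈ Ioi i, Real.log (h j - h i) := by
    rw [Real.log_prod (fun i _ => Finset.prod_ne_zero_iff.mpr
      (fun j hj => pow_ne_zero _ (ne_of_gt (hDpos i j hj))))]
    rw [Finset.mul_sum]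
    refine Finset.sum_congr rfl (fun i _ => ?_)
    rw [Real.log_prod (fun j hj => pow_ne_zero _ (ne_of_gt (hDpos i j hj))),
      Finset.mul_sum]
    refine Finset.sum_congr rfl (fun j hj => ?_)
    rw [Real.log_pow]
    push_cast
    ring
  have hDne : (∏ i, ∏ j ∈ Ioi i, (h j - h i)^2) ≠ 0 := by
    refine Finset.prod_ne_zero_iff.mpr (fun i _ => Finset.prod_ne_zero_iff.mpr
      (fun j hj => pow_ne_zero _ (ne_of_gt (hDpos i j hj))))
  have hlogL : Real.log ((2:ℝ) ^ (∑ i : Fin N, (Ioi i).card)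
        * ∏ i, ∏ j ∈ Ioi i, (h j - h i)^2)
      = ((∑ i : Fin N, (Ioi i).card : ℕ) : ℝ) * Real.log 2
        + 2 * ∑ i, ∑ j ∈ Ioi i, Real.log (h j - h i) := by
    rw [Real.log_mul (by positivity) hDne, Real.log_pow, hlogD]
  have hlogR : Real.log (∏ m ∈ Finset.Icc 1 N, (m:ℝ)^m)
      = ∑ m ∈ Finset.Icc 1 N, (m:ℝ) * Real.log m := by
    rw [Real.log_prod (fun m hm => by
      have : 1 ≤ m := (Finset.mem_Icc.mp hm).1
      positivity)]
    exact Finset.sum_congr rfl (fun m hm => by rw [Real.log_pow])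
  have hcomb : ((∑ i : Fin N, (Ioi i).card : ℕ) : ℝ) * Real.log 2
      + 2 * ∑ i, ∑ j ∈ Ioi i, Real.log (h j - h i)
      = ∑ m ∈ Finset.Icc 1 N, (m:ℝ) * Real.log m := by
    rw [← hlogL, ← hlogR, hdiscr]
  linear_combination (1/2) * hsq - (1/2) * hcomb + (Real.log 2 / 2) * hMc

-- ### the main theorem
/-- `F_A(v) ≥ K_A` with equality iff `v` is a permutation of the vector of
zeros of `H_N`; in particular `F_A(h_N) = K_A`. -/
theorem FA_ge_KA (N : ℕ) (hN : 2 ≤ N) (h : Fin N → ℝ) (hmono : StrictMono h)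
    (hzero : ∀ i, physHermite N (h i) = 0)
    (hall : ∀ x : ℝ, physHermite N x = 0 → ∃ i, x = h i) :
    let F : (Fin N → ℝ) → ℝ := fun v =>
      (1 / 2) * ∑ i, (v i) ^ 2 - ∑ i, ∑ j ∈ Finset.Ioi i, Real.log |v j - v i|
    let K : ℝ := ((N : ℝ) / 4) * ((N : ℝ) - 1) * (1 + Real.log 2)
      - (1 / 2) * ∑ i ∈ Finset.Icc 1 N, (i : ℝ) * Real.log i
    (∀ v : Fin N → ℝ, (∀ i j : Fin N, i ≠ j → v i ≠ v j) →
      K ≤ F v ∧ (F v = K ↔ ∃ σ : Equiv.Perm (Fin N), ∀ i, v i = h (σ i))) ∧ F h = K := by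
  intro F K
  have hNpos : 1 ≤ N := by omega
  have hzero' : ∀ i, eval (h i) (physH N) = 0 := fun i => by
    rw [← physHermite_eval]
    exact hzero i
  have hinj : Function.Injective h := hmono.injective
  have hcrit : ∀ i, h i = ∑ j ∈ univ.erase i, (h i - h j)⁻¹ :=
    critical_eq hinj hzero'
  have habs : ∀ w : Fin N → ℝ, StrictMono w →
      (∑ i, ∑ j ∈ Ioi i, Real.log |w j - w i|) = ∑ i, ∑ j ∈ Ioi i, Real.log (w j - w i) :=
    fun w hw => Finset.sum_congr rfl (fun i _ => Finset.sum_congr rfl (fun j hj => by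
      rw [abs_of_pos (sub_pos.mpr (hw (mem_Ioi.mp hj)))]))
  have hval : F h = K := by
    show (1/2) * ∑ i, (h i)^2 - ∑ i, ∑ j ∈ Ioi i, Real.log |h j - h i| = K
    rw [habs h hmono]
    exact value_eq hmono hzero' hNpos
  have key : ∀ w : Fin N → ℝ, StrictMono w → w ≠ h → F h < F w := by
    intro w hw hne
    show (1/2) * ∑ i, (h i)^2 - ∑ i, ∑ j ∈ Ioi i, Real.log |h j - h i|
      < (1/2) * ∑ i, (w i)^2 - ∑ i, ∑ j ∈ Ioi i, Real.log |w j - w i|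
    rw [habs h hmono, habs w hw]
    exact sorted_case hmono hcrit w hw hne
  refine ⟨?_, hval⟩
  intro v hdist
  have hvinj : Function.Injective v := fun a b hab => by
    by_contra hne
    exact hdist a b hne hab
  set σ₀ := Tuple.sort v with hσ₀
  have hwmono : StrictMono (v ∘ σ₀) :=
    (Tuple.monotone_sort v).strictMono_of_injective (hvinj.comp σ₀.injective)
  have hperm : F (v ∘ σ₀) = F v := by
    show (1/2) * ∑ i, (v (σ₀ i))^2 - ∑ i, ∑ j ∈ Ioi i, Real.log |v (σ₀ j) - v (σ₀ i)|
      = (1/2) * ∑ i, (v i)^2 - ∑ i, ∑ j ∈ Ioi i, Real.log |v j - v i|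
    rw [sq_perm v σ₀, logsum_perm v σ₀]
  have hiff2 : (v ∘ σ₀ = h) ↔ (∃ σ : Equiv.Perm (Fin N), ∀ i, v i = h (σ i)) := by
    constructor
    · intro heq
      refine ⟨σ₀⁻¹, fun i => ?_⟩
      have := congrFun heq (σ₀.symm i)
      simp only [Function.comp_apply, Equiv.apply_symm_apply] at this
      exact this
    · rintro ⟨σ, hσ⟩
      have hveq : v = fun i => h (σ i) := funext hσ
      refine strictMono_unique hwmono hmono ?_
      have h1 : Finset.image (v ∘ σ₀) univ = Finset.image v univ := by
        rw [← Finset.image_image, Finset.image_univ_equiv]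
      have h2 : Finset.image v univ = Finset.image h univ := by
        rw [hveq, show (fun i => h (σ i)) = h ∘ ⇑σ from rfl, ← Finset.image_image,
          Finset.image_univ_equiv]
      rw [h1, h2]
  rcases eq_or_ne (v ∘ σ₀) h with heq | hne
  · have hFvK : F v = K := by
      rw [← hperm, heq, hval]
    exact ⟨le_of_eq hFvK.symm, ⟨fun _ => hiff2.mp heq, fun _ => hFvK⟩⟩
  · have hlt : F h < F (v ∘ σ₀) := key _ hwmono hne
    rw [hperm, hval] at hlt
    refine ⟨le_of_lt hlt, ⟨fun hFK => absurd hFK (ne_of_gt hlt), fun hex => ?_⟩⟩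
    exact absurd (hiff2.mpr hex) hne
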